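/- Let d ≥ 2 be an integer, λ a real number with 0 < λ ≤ 1/4, θ ∈ ℝ, v₁ ∈ ℝ, and v₂₃ ∈ ℂ. If |v₁| ≥ ((2d−1)/4)·|v₂₃|, then (2d−1)·|v₁| ≥ ((2d−1)/4)·|π·i·e^{iθ}·v₁ + λ·v₂₃|. (In other words, the unstable cone {(v₁, v₂₃) : |v₁| ≥ ((2d−1)/4)·|v₂₃|} is invariant under the linear map (v₁, v₂₃) ↦ ((2d−1)·v₁, π·i·e^{iθ}·v₁ + λ·v₂₃).) -/

import Mathlib

/-- the unstable cone {(v₁, v₂₃) : |v₁| ≥ ((2d−1)/4)·|v₂₃|} is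
invariant under the linear map (v₁, v₂₃) ↦ ((2d−1)·v₁, π·i·e^{iθ}·v₁ + λ·v₂₃),
for 0 < λ ≤ 1/4. -/
theorem stmt18 (d : ℕ) (hd : 2 ≤ d) (lam : ℝ) (hlam0 : 0 < lam)
    (hlam1 : lam ≤ 1 / 4) (θ v₁ : ℝ) (v₂₃ : ℂ)
    (h : (2 * (d : ℝ) - 1) / 4 * ‖v₂₃‖ ≤ |v₁|) :
    (2 * (d : ℝ) - 1) / 4 *
      ‖(Real.pi : ℂ) * Complex.I * Complex.exp ((θ : ℂ) * Complex.I)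
        * (v₁ : ℂ) + (lam : ℂ) * v₂₃‖
      ≤ (2 * (d : ℝ) - 1) * |v₁| := by
  have hd3 : (3 : ℝ) ≤ 2 * (d : ℝ) - 1 := by
    have : (2 : ℝ) ≤ (d : ℝ) := by exact_mod_cast hd
    linarith
  have hpi : Real.pi < 3.15 := Real.pi_lt_d2
  have h1 : ‖(Real.pi : ℂ) * Complex.I * Complex.exp ((θ : ℂ) * Complex.I)
      * (v₁ : ℂ)‖ = Real.pi * |v₁| := by
    simp [map_mul, Complex.norm_exp, Complex.norm_real, abs_of_pos Real.pi_pos]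
  have h2 : ‖(lam : ℂ) * v₂₃‖ = lam * ‖v₂₃‖ := by
    simp [map_mul, Complex.norm_real, abs_of_pos hlam0]
  have htri := norm_add_le ((Real.pi : ℂ) * Complex.I * Complex.exp ((θ : ℂ) * Complex.I)
      * (v₁ : ℂ)) ((lam : ℂ) * v₂₃)
  rw [h1, h2] at htri
  have hv : (0 : ℝ) ≤ ‖v₂₃‖ := norm_nonneg _
  have hv1 : (0 : ℝ) ≤ |v₁| := abs_nonneg _
  -- |v₂₃| ≤ (4/3)|v₁|
  have hv23 : ‖v₂₃‖ ≤ 4 / 3 * |v₁| := by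
    nlinarith [mul_nonneg hv (sub_nonneg.2 hd3)]
  -- lam * |v₂₃| ≤ (1/4) * |v₂₃|
  have hl : lam * ‖v₂₃‖ ≤ 1 / 4 * ‖v₂₃‖ :=
    mul_le_mul_of_nonneg_right hlam1 hv
  have hA : ‖(Real.pi : ℂ) * Complex.I * Complex.exp ((θ : ℂ) * Complex.I)
      * (v₁ : ℂ) + (lam : ℂ) * v₂₃‖ ≤ 4 * |v₁| := by
    nlinarith
  calc (2 * (d : ℝ) - 1) / 4 *
      ‖(Real.pi : ℂ) * Complex.I * Complex.exp ((θ : ℂ) * Complex.I)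
        * (v₁ : ℂ) + (lam : ℂ) * v₂₃‖
      ≤ (2 * (d : ℝ) - 1) / 4 * (4 * |v₁|) :=
        mul_le_mul_of_nonneg_left hA (by linarith)
    _ = (2 * (d : ℝ) - 1) * |v₁| := by ring
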